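/- arXiv:2001.09361 — 2 statements merged into one kernel-verified Lean document; each statement's English description precedes it below -/
import Mathlib

section
/- Let J : A × A → A be a Jordan biderivation with J(e, e) = 0. Then for all m, m' ∈ A₁₂ and n, n' ∈ A₂₁: J(n, n') = eJ(n, n')e' + e'J(n, n')e + [n', J(n, e)] = eJ(n, n')e' + e'J(n, n')e + [n, J(e, n')], and J(m, m') = eJ(m, m')e' + e'J(m, m')e + [J(e, m'), m] = eJ(m, m')e' + e'J(m, m')e + [J(m, e), m']. -/
theorem jbd_key
    {R A : Type*} [CommRing R] [Ring A] [Algebra R A]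
    (f : A) (hf : f * f = f)
    (J : A →ₗ[R] A →ₗ[R] A)
    (hJ1 : ∀ x y : A, J (x * x) y = x * J x y + J x y * x)
    (hJ2 : ∀ x y : A, J x (y * y) = y * J x y + J x y * y)
    (hJf : J f f = 0)
    (n n' : A) (hn : (1 - f) * n * f = n) (hn' : (1 - f) * n' * f = n') :
    J n n' = f * J n n' * (1 - f) + (1 - f) * J n n' * f + (n' * J n f - J n f * n') ∧
    J n n' = f * J n n' * (1 - f) + (1 - f) * J n n' * f + (n * J f n' - J f n' * n) := by
  have hone1 : ∀ y : A, J 1 y = 0 := by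
    intro y
    have h := hJ1 1 y
    simp only [one_mul, mul_one] at h
    exact right_eq_add.mp h
  have hone2 : ∀ x : A, J x 1 = 0 := by
    intro x
    have h := hJ2 x 1
    simp only [one_mul, mul_one] at h
    exact right_eq_add.mp h
  -- multiplication facts
  have hnf : n * f = n := by
    linear_combination (norm := noncomm_ring) (1 - f) * n * hf + hn - hn * f
  have hfn : f * n = 0 := by
    linear_combination (norm := noncomm_ring) - f * hn - hf * (n * f)
  have hn'f : n' * f = n' := by
    linear_combination (norm := noncomm_ring) (1 - f) * n' * hf + hn' - hn' * f
  have hfn' : f * n' = 0 := by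
    linear_combination (norm := noncomm_ring) - f * hn' - hf * (n' * f)
  have hnn : n * n = 0 := by
    linear_combination (norm := noncomm_ring) n * hfn - hnf * n
  have hn'n' : n' * n' = 0 := by
    linear_combination (norm := noncomm_ring) n' * hfn' - hn'f * n'
  -- J of (1-f) against f vanishes
  have hJgf : J (1 - f) f = 0 := by
    rw [map_sub, LinearMap.sub_apply, hone1, hJf, sub_zero]
  have hJfg : J f (1 - f) = 0 := by
    rw [map_sub, hone2, hJf, sub_zero]
  -- basic square identities
  have hSid : J n f = f * J n f + J n f * f := by
    have h := hJ2 n f; rw [hf] at h; exact h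
  have hUid : J f n' = f * J f n' + J f n' * f := by
    have h := hJ1 f n'; rw [hf] at h; exact h
  have hTn' : n' * J n n' + J n n' * n' = 0 := by
    have h := hJ2 n n'; rw [hn'n', map_zero] at h; exact h.symm
  have hTn : n * J n n' + J n n' * n = 0 := by
    have h := hJ1 n n'; rw [hnn, map_zero, LinearMap.zero_apply] at h; exact h.symm
  have hSn : n * J n f + J n f * n = 0 := by
    have h := hJ1 n f; rw [hnn, map_zero, LinearMap.zero_apply] at h; exact h.symm
  have hUn' : n' * J f n' + J f n' * n' = 0 := by
    have h := hJ2 f n'; rw [hn'n', map_zero] at h; exact h.symm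
  -- polarization identities
  have hA : J n n' = f * J n n' + J n n' * f + n' * J n f + J n f * n' := by
    have hexp : (f + n') * (f + n') = f + n' := by
      linear_combination (norm := noncomm_ring) hf + hfn' + hn'f + hn'n'
    have h := hJ2 n (f + n')
    rw [hexp] at h
    simp only [map_add] at h
    linear_combination (norm := noncomm_ring) h - hSid + hTn'
  have hB : J n n' = f * J n n' + J n n' * f + n * J f n' + J f n' * n := by
    have hexp : (f + n) * (f + n) = f + n := by
      linear_combination (norm := noncomm_ring) hf + hfn + hnf + hnn
    have h := hJ1 (f + n) n'
    rw [hexp] at h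
    simp only [map_add, LinearMap.add_apply] at h
    linear_combination (norm := noncomm_ring) h - hUid + hTn
  have hC : J n f = (1 - f) * J n f + J n f * (1 - f) := by
    have hexp : (1 - f + n) * (1 - f + n) = 1 - f + n := by
      linear_combination (norm := noncomm_ring) hf - hfn - hnf + hnn
    have h := hJ1 (1 - f + n) f
    rw [hexp] at h
    simp only [map_add, LinearMap.add_apply] at h
    rw [hJgf] at h
    linear_combination (norm := noncomm_ring) h + hSn
  have hD : J f n' = (1 - f) * J f n' + J f n' * (1 - f) := by
    have hexp : (1 - f + n') * (1 - f + n') = 1 - f + n' := by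
      linear_combination (norm := noncomm_ring) hf - hfn' - hn'f + hn'n'
    have h := hJ2 f (1 - f + n')
    rw [hexp] at h
    simp only [map_add] at h
    rw [hJfg] at h
    linear_combination (norm := noncomm_ring) h + hUn'
  -- Peirce components of S = J n f and U = J f n'
  have c1 : f * J n f * f = 0 := by
    linear_combination (norm := noncomm_ring) f * hC * f - hf * (J n f * f) - (f * J n f) * hf
  have c2 : (1 - f) * J n f * (1 - f) = 0 := by
    linear_combination (norm := noncomm_ring)
      - ((1 - f) * hC * (1 - f)) - hf * (J n f * (1 - f)) - ((1 - f) * J n f) * hf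
  have d1 : f * J f n' * f = 0 := by
    linear_combination (norm := noncomm_ring) f * hD * f - hf * (J f n' * f) - (f * J f n') * hf
  have d2 : (1 - f) * J f n' * (1 - f) = 0 := by
    linear_combination (norm := noncomm_ring)
      - ((1 - f) * hD * (1 - f)) - hf * (J f n' * (1 - f)) - ((1 - f) * J f n') * hf
  have c3 : (1 - f) * J n f * n' = 0 := by
    linear_combination (norm := noncomm_ring) c2 * n' + ((1 - f) * J n f) * hfn'
  have c4 : n' * J n f * f = 0 := by
    linear_combination (norm := noncomm_ring) n' * c1 - hn'f * (J n f * f)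
  have c3' : (1 - f) * J f n' * n = 0 := by
    linear_combination (norm := noncomm_ring) d2 * n + ((1 - f) * J f n') * hfn
  have c4' : n * J f n' * f = 0 := by
    linear_combination (norm := noncomm_ring) n * d1 - hnf * (J f n' * f)
  -- corner values of T = J n n'
  have k1 : f * J n n' * f = -(J n f * n') := by
    linear_combination (norm := noncomm_ring)
      - (f * hA * f) - hf * (J n n' * f) - (f * J n n') * hf
      - hfn' * (J n f * f) - (f * J n f) * hn'f + c3
  have k2 : (1 - f) * J n n' * (1 - f) = n' * J n f := by
    linear_combination (norm := noncomm_ring)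
      (1 - f) * hA * (1 - f) - hf * (J n n' * (1 - f)) - (1 - f) * J n n' * hf
      - c4 - hfn' * (J n f * (1 - f)) + c3 - c3 * f
  have k1' : f * J n n' * f = -(J f n' * n) := by
    linear_combination (norm := noncomm_ring)
      - (f * hB * f) - hf * (J n n' * f) - (f * J n n') * hf
      - hfn * (J f n' * f) - (f * J f n') * hnf + c3'
  have k2' : (1 - f) * J n n' * (1 - f) = n * J f n' := by
    linear_combination (norm := noncomm_ring)
      (1 - f) * hB * (1 - f) - hf * (J n n' * (1 - f)) - (1 - f) * J n n' * hf
      - c4' - hfn * (J f n' * (1 - f)) + c3' - c3' * f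
  constructor
  · linear_combination (norm := noncomm_ring) k1 + k2
  · linear_combination (norm := noncomm_ring) k1' + k2'
/-- Let `J : A × A → A` be a Jordan biderivation with `J(e,e) = 0`.
Then for all `m, m' ∈ A₁₂ = eAe'` and `n, n' ∈ A₂₁ = e'Ae` (`e' = 1 - e`):
`J(n,n') = eJ(n,n')e' + e'J(n,n')e + [n', J(n,e)] = eJ(n,n')e' + e'J(n,n')e + [n, J(e,n')]`
and
`J(m,m') = eJ(m,m')e' + e'J(m,m')e + [J(e,m'), m] = eJ(m,m')e' + e'J(m,m')e + [J(m,e), m']`. -/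
theorem jordan_biderivation_offdiagonal_pairs
    (R A : Type*) [CommRing R] [Ring A] [Algebra R A]
    -- `A` is 2-torsion free:
    (htf : ∀ x : A, x + x = 0 → x = 0)
    -- `e` is a nontrivial idempotent:
    (e : A) (he : e * e = e) (he0 : e ≠ 0) (he1 : e ≠ 1)
    (J : A →ₗ[R] A →ₗ[R] A)
    -- `J` is a Jordan biderivation:
    (hJ1 : ∀ x y : A, J (x * x) y = x * J x y + J x y * x)
    (hJ2 : ∀ x y : A, J x (y * y) = y * J x y + J x y * y)
    -- `J(e, e) = 0`:
    (hJe : J e e = 0) :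
    ∀ m m' n n' : A,
      e * m * (1 - e) = m → e * m' * (1 - e) = m' →
      (1 - e) * n * e = n → (1 - e) * n' * e = n' →
      J n n' = e * J n n' * (1 - e) + (1 - e) * J n n' * e + (n' * J n e - J n e * n') ∧
      J n n' = e * J n n' * (1 - e) + (1 - e) * J n n' * e + (n * J e n' - J e n' * n) ∧
      J m m' = e * J m m' * (1 - e) + (1 - e) * J m m' * e + (J e m' * m - m * J e m') ∧
      J m m' = e * J m m' * (1 - e) + (1 - e) * J m m' * e + (J m e * m' - m' * J m e) := by
  intro m m' n n' hm hm' hn hn'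
  have hone1 : ∀ y : A, J 1 y = 0 := by
    intro y
    have h := hJ1 1 y
    simp only [one_mul, mul_one] at h
    exact right_eq_add.mp h
  have hone2 : ∀ x : A, J x 1 = 0 := by
    intro x
    have h := hJ2 x 1
    simp only [one_mul, mul_one] at h
    exact right_eq_add.mp h
  have hf' : (1 - e) * (1 - e) = 1 - e := by
    linear_combination (norm := noncomm_ring) he
  have hJe' : J (1 - e) (1 - e) = 0 := by
    simp [map_sub, LinearMap.sub_apply, hone1, hone2, hJe]
  have hm2 : (1 - (1 - e)) * m * (1 - e) = m := by rw [sub_sub_cancel]; exact hm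
  have hm'2 : (1 - (1 - e)) * m' * (1 - e) = m' := by rw [sub_sub_cancel]; exact hm'
  obtain ⟨K1, K2⟩ := jbd_key (1 - e) hf' J hJ1 hJ2 hJe' m m' hm2 hm'2
  obtain ⟨G1, G2⟩ := jbd_key e he J hJ1 hJ2 hJe n n' hn hn'
  have hneg1 : J (1 - e) m' = - J e m' := by
    rw [map_sub, LinearMap.sub_apply, hone1, zero_sub]
  have hneg2 : J m (1 - e) = - J m e := by
    rw [map_sub, hone2, zero_sub]
  refine ⟨G1, G2, ?_, ?_⟩
  · linear_combination (norm := noncomm_ring) K2 + m * hneg1 - hneg1 * m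
  · linear_combination (norm := noncomm_ring) K1 + m' * hneg2 - hneg2 * m'
end

section
/- Assume that e'Ae = {0} (so that A is a triangular algebra, isomorphic to Tri(eAe; eAe'; e'Ae')) and that the bimodule eAe' is faithful as a left eAe-module (for a ∈ eAe, a·eAe' = {0} implies a = 0) and as a right e'Ae'-module (for b ∈ e'Ae', eAe'·b = {0} implies b = 0). Then every Jordan biderivation J : A × A → A is a biderivation. -/
private lemma eq_of_diff' {A : Type*} [Ring A] {a b c d : A} (h : c = d)
    (h2 : a - b = c - d) : a = b := by
  rw [h, sub_self] at h2; exact sub_eq_zero.mp h2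

private theorem jd_core {A : Type*} [Ring A]
    (htf : ∀ x : A, x + x = 0 → x = 0)
    (e : A) (he : e * e = e)
    (htri : ∀ x : A, (1 - e) * x * e = 0)
    (hfl : ∀ x : A, (∀ y : A, (e * x * e) * (e * y * (1 - e)) = 0) → e * x * e = 0)
    (hfr : ∀ x : A, (∀ y : A, (e * y * (1 - e)) * ((1 - e) * x * (1 - e)) = 0) →
      (1 - e) * x * (1 - e) = 0)
    (D : A → A) (Dadd : ∀ x y, D (x + y) = D x + D y)
    (hJ : ∀ x, D (x * x) = x * D x + D x * x)
    (hDe : D e = 0) : ∀ x y, D (x * y) = D x * y + x * D y := by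
  set f : A := 1 - e with hf
  have hef : e * f = 0 := by rw [hf, mul_sub, mul_one, he, sub_self]
  have hfe : f * e = 0 := by rw [hf, sub_mul, one_mul, he, sub_self]
  have hff : f * f = f := by rw [hf, sub_mul, one_mul, mul_sub, mul_one, he]; abel
  have hef1 : e + f = 1 := by rw [hf]; abel
  have heeX : ∀ X : A, e * (e * X) = e * X := fun X => by rw [← mul_assoc, he]
  have hefX : ∀ X : A, e * (f * X) = 0 := fun X => by rw [← mul_assoc, hef, zero_mul]
  have hfeX : ∀ X : A, f * (e * X) = 0 := fun X => by rw [← mul_assoc, hfe, zero_mul]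
  have hffX : ∀ X : A, f * (f * X) = f * X := fun X => by rw [← mul_assoc, hff]
  have hdec : ∀ z : A, z = e * z * e + e * z * f + f * z * f := by
    intro z
    have h1 : (e + f) * z * (e + f) = e * z * e + e * z * f + (f * z * e + f * z * f) := by
      noncomm_ring
    rw [htri z, zero_add] at h1
    calc z = (e + f) * z * (e + f) := by rw [hef1, one_mul, mul_one]
      _ = _ := h1
  -- polarization
  have P : ∀ x y, D (x * y + y * x) = D x * y + x * D y + D y * x + y * D x := by
    intro x y
    have h := hJ (x + y)
    have hsq : (x + y) * (x + y) = x * x + (x * y + y * x) + y * y := by noncomm_ring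
    rw [hsq, Dadd (x * x + (x * y + y * x)) (y * y), Dadd (x * x) (x * y + y * x),
      Dadd x y, hJ x, hJ y] at h
    exact eq_of_diff' h (by noncomm_ring)
  have hD1 : D 1 = 0 := by
    have h := hJ 1
    rw [one_mul, one_mul, mul_one] at h
    exact right_eq_add.mp h
  have hDf : D f = 0 := by
    have h := Dadd e f
    rw [hef1, hD1, hDe, zero_add] at h
    exact h.symm
  have hD0 : D 0 = 0 := by
    have h := Dadd 0 0
    rw [add_zero] at h
    exact right_eq_add.mp h
  -- structural lemma for eAe
  have hSa : ∀ x, D (e * x * e) = e * D (e * x * e) * e := by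
    intro x
    have h1 := P e (e * x * e)
    rw [hDe, zero_mul, mul_zero, add_zero, zero_add] at h1
    have harg : e * (e * x * e) + (e * x * e) * e = (e * x * e) + (e * x * e) := by
      simp only [mul_add, add_mul, mul_assoc, he, hef, hfe, hff, heeX, hefX, hfeX, hffX, mul_zero, zero_mul, add_zero, zero_add]
    rw [harg, Dadd] at h1
    have h2 := P (e * x * e) f
    rw [hDf, zero_mul, mul_zero, add_zero, add_zero] at h2
    have harg2 : (e * x * e) * f + f * (e * x * e) = 0 := by
      simp only [mul_add, add_mul, mul_assoc, he, hef, hfe, hff, heeX, hefX, hfeX, hffX, mul_zero, zero_mul, add_zero, zero_add]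
    rw [harg2, hD0] at h2
    have heaf : e * D (e * x * e) * f = 0 := by
      have h3 := congrArg (fun t => e * t * f) h2
      simp only [mul_add, add_mul, mul_assoc, he, hef, hfe, hff, heeX, hefX, hfeX, hffX, mul_zero, zero_mul, add_zero, zero_add] at h3
      simpa only [mul_assoc] using h3.symm
    have hfaf : f * D (e * x * e) * f = 0 := by
      have h3 := congrArg (fun t => f * t * f) h1
      simp only [mul_add, add_mul, mul_assoc, he, hef, hfe, hff, heeX, hefX, hfeX, hffX, mul_zero, zero_mul, add_zero, zero_add] at h3
      simpa only [mul_assoc] using htf _ h3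
    have hd := hdec (D (e * x * e))
    rw [heaf, hfaf, add_zero, add_zero] at hd
    exact hd
  -- structural lemma for eAf
  have hSm : ∀ x, D (e * x * f) = e * D (e * x * f) * f := by
    intro x
    have h1 := P e (e * x * f)
    rw [hDe, zero_mul, mul_zero, add_zero, zero_add] at h1
    have harg : e * (e * x * f) + (e * x * f) * e = e * x * f := by
      simp only [mul_add, add_mul, mul_assoc, he, hef, hfe, hff, heeX, hefX, hfeX, hffX, mul_zero, zero_mul, add_zero, zero_add]
    rw [harg] at h1
    have heme : e * D (e * x * f) * e = 0 := by
      have h3 := congrArg (fun t => e * t * e) h1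
      simp only [mul_add, add_mul, mul_assoc, he, hef, hfe, hff, heeX, hefX, hfeX, hffX, mul_zero, zero_mul, add_zero, zero_add] at h3
      simpa only [mul_assoc] using right_eq_add.mp h3
    have hfmf : f * D (e * x * f) * f = 0 := by
      have h3 := congrArg (fun t => f * t * f) h1
      simp only [mul_add, add_mul, mul_assoc, he, hef, hfe, hff, heeX, hefX, hfeX, hffX, mul_zero, zero_mul, add_zero, zero_add] at h3
      simpa only [mul_assoc] using h3
    have hd := hdec (D (e * x * f))
    rw [heme, hfmf, zero_add, add_zero] at hd
    exact hd
  -- structural lemma for fAf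
  have hSb : ∀ x, D (f * x * f) = f * D (f * x * f) * f := by
    intro x
    have h1 := P e (f * x * f)
    rw [hDe, zero_mul, mul_zero, add_zero, zero_add] at h1
    have harg : e * (f * x * f) + (f * x * f) * e = 0 := by
      simp only [mul_add, add_mul, mul_assoc, he, hef, hfe, hff, heeX, hefX, hfeX, hffX, mul_zero, zero_mul, add_zero, zero_add]
    rw [harg, hD0] at h1
    have hebe : e * D (f * x * f) * e = 0 := by
      have h3 := congrArg (fun t => e * t * e) h1
      simp only [mul_add, add_mul, mul_assoc, he, hef, hfe, hff, heeX, hefX, hfeX, hffX, mul_zero, zero_mul, add_zero, zero_add] at h3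
      simpa only [mul_assoc] using htf _ h3.symm
    have hebf : e * D (f * x * f) * f = 0 := by
      have h3 := congrArg (fun t => e * t * f) h1
      simp only [mul_add, add_mul, mul_assoc, he, hef, hfe, hff, heeX, hefX, hfeX, hffX, mul_zero, zero_mul, add_zero, zero_add] at h3
      simpa only [mul_assoc] using h3.symm
    have hd := hdec (D (f * x * f))
    rw [hebe, hebf, zero_add, zero_add] at hd
    exact hd
  -- multiplicativity on eAe × eAf
  have hMam : ∀ x y, D ((e * x * e) * (e * y * f)) =
      D (e * x * e) * (e * y * f) + (e * x * e) * D (e * y * f) := by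
    intro x y
    have h := P (e * x * e) (e * y * f)
    have h1 : (e * x * e) * (e * y * f) + (e * y * f) * (e * x * e) =
        (e * x * e) * (e * y * f) := by
      simp only [mul_add, add_mul, mul_assoc, he, hef, hfe, hff, heeX, hefX, hfeX, hffX, mul_zero, zero_mul, add_zero, zero_add]
    rw [h1] at h
    have h2 : D (e * y * f) * (e * x * e) = 0 := by
      rw [hSm y]; simp only [mul_add, add_mul, mul_assoc, he, hef, hfe, hff, heeX, hefX, hfeX, hffX, mul_zero, zero_mul, add_zero, zero_add]
    have h3 : (e * y * f) * D (e * x * e) = 0 := by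
      rw [hSa x]; simp only [mul_add, add_mul, mul_assoc, he, hef, hfe, hff, heeX, hefX, hfeX, hffX, mul_zero, zero_mul, add_zero, zero_add]
    rw [h2, h3, add_zero, add_zero] at h
    exact h
  -- multiplicativity on eAf × fAf
  have hMmb : ∀ x y, D ((e * x * f) * (f * y * f)) =
      D (e * x * f) * (f * y * f) + (e * x * f) * D (f * y * f) := by
    intro x y
    have h := P (e * x * f) (f * y * f)
    have h1 : (e * x * f) * (f * y * f) + (f * y * f) * (e * x * f) =
        (e * x * f) * (f * y * f) := by
      simp only [mul_add, add_mul, mul_assoc, he, hef, hfe, hff, heeX, hefX, hfeX, hffX, mul_zero, zero_mul, add_zero, zero_add]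
    rw [h1] at h
    have h2 : D (f * y * f) * (e * x * f) = 0 := by
      rw [hSb y]; simp only [mul_add, add_mul, mul_assoc, he, hef, hfe, hff, heeX, hefX, hfeX, hffX, mul_zero, zero_mul, add_zero, zero_add]
    have h3 : (f * y * f) * D (e * x * f) = 0 := by
      rw [hSm x]; simp only [mul_add, add_mul, mul_assoc, he, hef, hfe, hff, heeX, hefX, hfeX, hffX, mul_zero, zero_mul, add_zero, zero_add]
    rw [h2, h3, add_zero, add_zero] at h
    exact h
  -- multiplicativity on eAe × eAe
  have hMaa : ∀ x y, D ((e * x * e) * (e * y * e)) =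
      D (e * x * e) * (e * y * e) + (e * x * e) * D (e * y * e) := by
    intro x y
    have c1 : e * (x * e * y) * e = (e * x * e) * (e * y * e) := by
      simp only [mul_add, add_mul, mul_assoc, he, hef, hfe, hff, heeX, hefX, hfeX, hffX, mul_zero, zero_mul, add_zero, zero_add]
    have key : ∀ z : A, (D ((e * x * e) * (e * y * e)) - D (e * x * e) * (e * y * e)
        - (e * x * e) * D (e * y * e)) * (e * z * f) = 0 := by
      intro z
      have c2 : e * (y * e * z) * f = (e * y * e) * (e * z * f) := by
        simp only [mul_add, add_mul, mul_assoc, he, hef, hfe, hff, heeX, hefX, hfeX, hffX, mul_zero, zero_mul, add_zero, zero_add]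
      have h1 := hMam (x * e * y) z
      rw [c1] at h1
      have h2 := hMam x (y * e * z)
      rw [c2] at h2
      rw [hMam y z] at h2
      have c3 : (e * x * e) * ((e * y * e) * (e * z * f)) =
          ((e * x * e) * (e * y * e)) * (e * z * f) := (mul_assoc _ _ _).symm
      rw [c3] at h2
      have h4 := h1.symm.trans h2
      exact eq_of_diff' h4 (by noncomm_ring)
    have d1 : D ((e * x * e) * (e * y * e)) = e * D ((e * x * e) * (e * y * e)) * e := by
      rw [← c1]; exact hSa (x * e * y)
    have hrep : D ((e * x * e) * (e * y * e)) - D (e * x * e) * (e * y * e)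
        - (e * x * e) * D (e * y * e) =
        e * (D ((e * x * e) * (e * y * e)) - D (e * x * e) * (e * y * e)
        - (e * x * e) * D (e * y * e)) * e := by
      conv_lhs => rw [d1, hSa x, hSa y]
      simp only [mul_sub, sub_mul, mul_add, add_mul, mul_assoc, he, hef, hfe, hff, heeX, hefX, hfeX, hffX, mul_zero, zero_mul, add_zero, zero_add]
    have hz := hfl (D ((e * x * e) * (e * y * e)) - D (e * x * e) * (e * y * e)
        - (e * x * e) * D (e * y * e)) (fun z => by rw [← hrep]; exact key z)
    rw [← hrep] at hz
    have : D ((e * x * e) * (e * y * e)) - (D (e * x * e) * (e * y * e)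
        + (e * x * e) * D (e * y * e)) = 0 := by
      rw [show D ((e * x * e) * (e * y * e)) - (D (e * x * e) * (e * y * e)
        + (e * x * e) * D (e * y * e)) = D ((e * x * e) * (e * y * e))
        - D (e * x * e) * (e * y * e) - (e * x * e) * D (e * y * e) from by abel]
      exact hz
    exact sub_eq_zero.mp this
  -- multiplicativity on fAf × fAf
  have hMbb : ∀ x y, D ((f * x * f) * (f * y * f)) =
      D (f * x * f) * (f * y * f) + (f * x * f) * D (f * y * f) := by
    intro x y
    have c1 : f * (x * f * y) * f = (f * x * f) * (f * y * f) := by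
      simp only [mul_add, add_mul, mul_assoc, he, hef, hfe, hff, heeX, hefX, hfeX, hffX, mul_zero, zero_mul, add_zero, zero_add]
    have key : ∀ z : A, (e * z * f) * (D ((f * x * f) * (f * y * f))
        - D (f * x * f) * (f * y * f) - (f * x * f) * D (f * y * f)) = 0 := by
      intro z
      have c2 : e * (z * f * x) * f = (e * z * f) * (f * x * f) := by
        simp only [mul_add, add_mul, mul_assoc, he, hef, hfe, hff, heeX, hefX, hfeX, hffX, mul_zero, zero_mul, add_zero, zero_add]
      have h1 := hMmb (z * f * x) y
      rw [c2] at h1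
      rw [hMmb z x] at h1
      have h2 := hMmb z (x * f * y)
      rw [c1] at h2
      have c3 : (e * z * f) * ((f * x * f) * (f * y * f)) =
          ((e * z * f) * (f * x * f)) * (f * y * f) := (mul_assoc _ _ _).symm
      rw [c3] at h2
      have h4 := h2.symm.trans h1
      exact eq_of_diff' h4 (by noncomm_ring)
    have d1 : D ((f * x * f) * (f * y * f)) = f * D ((f * x * f) * (f * y * f)) * f := by
      rw [← c1]; exact hSb (x * f * y)
    have hrep : D ((f * x * f) * (f * y * f)) - D (f * x * f) * (f * y * f)
        - (f * x * f) * D (f * y * f) =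
        f * (D ((f * x * f) * (f * y * f)) - D (f * x * f) * (f * y * f)
        - (f * x * f) * D (f * y * f)) * f := by
      conv_lhs => rw [d1, hSb x, hSb y]
      simp only [mul_sub, sub_mul, mul_add, add_mul, mul_assoc, he, hef, hfe, hff, heeX, hefX, hfeX, hffX, mul_zero, zero_mul, add_zero, zero_add]
    have hz := hfr (D ((f * x * f) * (f * y * f)) - D (f * x * f) * (f * y * f)
        - (f * x * f) * D (f * y * f)) (fun z => by rw [← hrep]; exact key z)
    rw [← hrep] at hz
    have : D ((f * x * f) * (f * y * f)) - (D (f * x * f) * (f * y * f)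
        + (f * x * f) * D (f * y * f)) = 0 := by
      rw [show D ((f * x * f) * (f * y * f)) - (D (f * x * f) * (f * y * f)
        + (f * x * f) * D (f * y * f)) = D ((f * x * f) * (f * y * f))
        - D (f * x * f) * (f * y * f) - (f * x * f) * D (f * y * f) from by abel]
      exact hz
    exact sub_eq_zero.mp this
  have final : ∀ p q r s t u : A,
      D ((e*p*e + e*q*f + f*r*f) * (e*s*e + e*t*f + f*u*f)) =
      D (e*p*e + e*q*f + f*r*f) * (e*s*e + e*t*f + f*u*f)
      + (e*p*e + e*q*f + f*r*f) * D (e*s*e + e*t*f + f*u*f) := by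
    intro p q r s t u
    have z1 : D (e*p*e) * (f*u*f) = 0 := by rw [hSa p]; simp only [mul_add, add_mul, mul_assoc, he, hef, hfe, hff, heeX, hefX, hfeX, hffX, mul_zero, zero_mul, add_zero, zero_add]
    have z2 : D (e*q*f) * (e*s*e) = 0 := by rw [hSm q]; simp only [mul_add, add_mul, mul_assoc, he, hef, hfe, hff, heeX, hefX, hfeX, hffX, mul_zero, zero_mul, add_zero, zero_add]
    have z3 : D (e*q*f) * (e*t*f) = 0 := by rw [hSm q]; simp only [mul_add, add_mul, mul_assoc, he, hef, hfe, hff, heeX, hefX, hfeX, hffX, mul_zero, zero_mul, add_zero, zero_add]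
    have z4 : D (f*r*f) * (e*s*e) = 0 := by rw [hSb r]; simp only [mul_add, add_mul, mul_assoc, he, hef, hfe, hff, heeX, hefX, hfeX, hffX, mul_zero, zero_mul, add_zero, zero_add]
    have z5 : D (f*r*f) * (e*t*f) = 0 := by rw [hSb r]; simp only [mul_add, add_mul, mul_assoc, he, hef, hfe, hff, heeX, hefX, hfeX, hffX, mul_zero, zero_mul, add_zero, zero_add]
    have z6 : (e*p*e) * D (f*u*f) = 0 := by rw [hSb u]; simp only [mul_add, add_mul, mul_assoc, he, hef, hfe, hff, heeX, hefX, hfeX, hffX, mul_zero, zero_mul, add_zero, zero_add]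
    have z7 : (e*q*f) * D (e*s*e) = 0 := by rw [hSa s]; simp only [mul_add, add_mul, mul_assoc, he, hef, hfe, hff, heeX, hefX, hfeX, hffX, mul_zero, zero_mul, add_zero, zero_add]
    have z8 : (e*q*f) * D (e*t*f) = 0 := by rw [hSm t]; simp only [mul_add, add_mul, mul_assoc, he, hef, hfe, hff, heeX, hefX, hfeX, hffX, mul_zero, zero_mul, add_zero, zero_add]
    have z9 : (f*r*f) * D (e*s*e) = 0 := by rw [hSa s]; simp only [mul_add, add_mul, mul_assoc, he, hef, hfe, hff, heeX, hefX, hfeX, hffX, mul_zero, zero_mul, add_zero, zero_add]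
    have z10 : (f*r*f) * D (e*t*f) = 0 := by rw [hSm t]; simp only [mul_add, add_mul, mul_assoc, he, hef, hfe, hff, heeX, hefX, hfeX, hffX, mul_zero, zero_mul, add_zero, zero_add]
    have hP : (e*p*e + e*q*f + f*r*f) * (e*s*e + e*t*f + f*u*f) =
        ((e*p*e)*(e*s*e) + (e*p*e)*(e*t*f)) + ((e*q*f)*(f*u*f) + (f*r*f)*(f*u*f)) := by
      simp only [mul_add, add_mul, mul_assoc, he, hef, hfe, hff, heeX, hefX, hfeX, hffX, mul_zero, zero_mul, add_zero, zero_add]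
    rw [hP,
      Dadd ((e*p*e)*(e*s*e) + (e*p*e)*(e*t*f)) ((e*q*f)*(f*u*f) + (f*r*f)*(f*u*f)),
      Dadd ((e*p*e)*(e*s*e)) ((e*p*e)*(e*t*f)),
      Dadd ((e*q*f)*(f*u*f)) ((f*r*f)*(f*u*f)),
      hMaa p s, hMam p t, hMmb q u, hMbb r u,
      Dadd (e*p*e + e*q*f) (f*r*f), Dadd (e*p*e) (e*q*f),
      Dadd (e*s*e + e*t*f) (f*u*f), Dadd (e*s*e) (e*t*f)]
    simp only [add_mul, mul_add]
    rw [z1, z2, z3, z4, z5, z6, z7, z8, z9, z10]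
    simp only [add_zero, zero_add]
    abel
  intro x y
  have h := final x x x y y y
  rw [← hdec x, ← hdec y] at h
  exact h

private theorem jd_full {A : Type*} [Ring A]
    (htf : ∀ x : A, x + x = 0 → x = 0)
    (e : A) (he : e * e = e)
    (htri : ∀ x : A, (1 - e) * x * e = 0)
    (hfl : ∀ x : A, (∀ y : A, (e * x * e) * (e * y * (1 - e)) = 0) → e * x * e = 0)
    (hfr : ∀ x : A, (∀ y : A, (e * y * (1 - e)) * ((1 - e) * x * (1 - e)) = 0) →
      (1 - e) * x * (1 - e) = 0)
    (D : A → A) (Dadd : ∀ x y, D (x + y) = D x + D y)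
    (hJ : ∀ x, D (x * x) = x * D x + D x * x) :
    ∀ x y, D (x * y) = D x * y + x * D y := by
  set f : A := 1 - e with hf
  have hef : e * f = 0 := by rw [hf, mul_sub, mul_one, he, sub_self]
  have hfe : f * e = 0 := by rw [hf, sub_mul, one_mul, he, sub_self]
  have hff : f * f = f := by rw [hf, sub_mul, one_mul, mul_sub, mul_one, he]; abel
  have hef1 : e + f = 1 := by rw [hf]; abel
  have heeX : ∀ X : A, e * (e * X) = e * X := fun X => by rw [← mul_assoc, he]
  have hefX : ∀ X : A, e * (f * X) = 0 := fun X => by rw [← mul_assoc, hef, zero_mul]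
  have hfeX : ∀ X : A, f * (e * X) = 0 := fun X => by rw [← mul_assoc, hfe, zero_mul]
  have hffX : ∀ X : A, f * (f * X) = f * X := fun X => by rw [← mul_assoc, hff]
  have hdec : ∀ z : A, z = e * z * e + e * z * f + f * z * f := by
    intro z
    have h1 : (e + f) * z * (e + f) = e * z * e + e * z * f + (f * z * e + f * z * f) := by
      noncomm_ring
    rw [htri z, zero_add] at h1
    calc z = (e + f) * z * (e + f) := by rw [hef1, one_mul, mul_one]
      _ = _ := h1
  have h := hJ e
  rw [he] at h
  have cee : e * D e * e = 0 := by
    have h3 := congrArg (fun t => e * t * e) h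
    simp only [mul_add, add_mul, mul_assoc, he, hef, hfe, hff, heeX, hefX, hfeX, hffX, mul_zero, zero_mul, add_zero, zero_add] at h3
    simpa only [mul_assoc] using right_eq_add.mp h3
  have cff : f * D e * f = 0 := by
    have h3 := congrArg (fun t => f * t * f) h
    simp only [mul_add, add_mul, mul_assoc, he, hef, hfe, hff, heeX, hefX, hfeX, hffX, mul_zero, zero_mul, add_zero, zero_add] at h3
    simpa only [mul_assoc] using h3
  have hde : D e = e * D e * f := by
    have hd := hdec (D e)
    rw [cee, cff, zero_add, add_zero] at hd
    exact hd
  have h1 : e * D e = D e := by rw [hde]; simp only [mul_add, add_mul, mul_assoc, he, hef, hfe, hff, heeX, hefX, hfeX, hffX, mul_zero, zero_mul, add_zero, zero_add]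
  have h2 : D e * e = 0 := by rw [hde]; simp only [mul_add, add_mul, mul_assoc, he, hef, hfe, hff, heeX, hefX, hfeX, hffX, mul_zero, zero_mul, add_zero, zero_add]
  set E : A → A := fun x => D x - (x * D e - D e * x) with hEdef
  have Eadd : ∀ a b, E (a + b) = E a + E b := by
    intro a b; simp only [hEdef]; rw [Dadd]; noncomm_ring
  have EJ : ∀ a, E (a * a) = a * E a + E a * a := by
    intro a; simp only [hEdef]; rw [hJ a]; noncomm_ring
  have hEe : E e = 0 := by
    simp only [hEdef]
    rw [h1, h2, sub_zero, sub_self]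
  have hEder := jd_core htf e he htri hfl hfr E Eadd EJ hEe
  intro x y
  have hxy := hEder x y
  simp only [hEdef] at hxy
  exact eq_of_diff' hxy (by noncomm_ring)



/-- Assume `e'Ae = {0}` (so `A` is a triangular algebra, isomorphic to
`Tri(eAe; eAe'; e'Ae')`) and that the bimodule `eAe'` is faithful as a left
`eAe`-module and as a right `e'Ae'`-module.  Then every Jordan biderivation
`J : A × A → A` is a biderivation. -/
theorem jordan_biderivation_triangular_is_biderivation
    (R A : Type*) [CommRing R] [Ring A] [Algebra R A]
    -- `A` is 2-torsion free:
    (htf : ∀ x : A, x + x = 0 → x = 0)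
    -- `e` is a nontrivial idempotent:
    (e : A) (he : e * e = e) (he0 : e ≠ 0) (he1 : e ≠ 1)
    -- `e'Ae = {0}` (triangularity):
    (htri : ∀ x : A, (1 - e) * x * e = 0)
    -- `eAe'` is a faithful left `eAe`-module:
    (hfl : ∀ x : A, (∀ y : A, (e * x * e) * (e * y * (1 - e)) = 0) → e * x * e = 0)
    -- `eAe'` is a faithful right `e'Ae'`-module:
    (hfr : ∀ x : A, (∀ y : A, (e * y * (1 - e)) * ((1 - e) * x * (1 - e)) = 0) →
      (1 - e) * x * (1 - e) = 0)
    (J : A →ₗ[R] A →ₗ[R] A)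
    -- `J` is a Jordan biderivation:
    (hJ1 : ∀ x y : A, J (x * x) y = x * J x y + J x y * x)
    (hJ2 : ∀ x y : A, J x (y * y) = y * J x y + J x y * y) :
    -- `J` is a biderivation:
    (∀ x y z : A, J (x * y) z = J x z * y + x * J y z) ∧
    (∀ x y z : A, J z (x * y) = J z x * y + x * J z y) := by
  
  constructor
  · intro x y z
    exact jd_full htf e he htri hfl hfr (fun w => J w z)
      (fun u v => by show J (u+v) z = J u z + J v z; rw [map_add, LinearMap.add_apply]) (fun x => hJ1 x z) x y
  · intro x y z
    exact jd_full htf e he htri hfl hfr (fun w => J z w)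
      (fun u v => map_add (J z) u v) (fun y => hJ2 z y) x y
end
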